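/- For the unweighted normalized Laplacian Δf(x) = (1/d_x) Σ_{y∼x} (f(y)−f(x)) on a locally finite simple graph, the Bochner-type identity holds: Γ₂(f)(x) = (1/4) Σ_{y∼x, z∼y} (1/(d_x d_y)) |f(x) − 2f(y) + f(z)|² + (1/2)(Δf(x))² − (1/2) Σ_{y∼x} (1/d_x) |f(y) − f(x)|². -/

import Mathlib

open Finset

variable {V : Type*}

/-- Unweighted non-normalized graph Laplacian. -/
noncomputable def nnLap (G : SimpleGraph V) [G.LocallyFinite] (f : V → ℝ) (x : V) : ℝ :=
  ∑ y ∈ G.neighborFinset x, (f y - f x)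

/-- Unweighted normalized graph Laplacian. -/
noncomputable def nLap (G : SimpleGraph V) [G.LocallyFinite] (f : V → ℝ) (x : V) : ℝ :=
  (∑ y ∈ G.neighborFinset x, (f y - f x)) / (G.degree x : ℝ)

/-- Bakry–Émery carré du champ operator Γ for a Laplacian `L`. -/
noncomputable def gam (L : (V → ℝ) → V → ℝ) (f g : V → ℝ) (x : V) : ℝ :=
  (L (f * g) x - f x * L g x - g x * L f x) / 2

/-- Iterated carré du champ operator Γ₂ for a Laplacian `L`. -/
noncomputable def gam2 (L : (V → ℝ) → V → ℝ) (f g : V → ℝ) (x : V) : ℝ :=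
  (L (gam L f g) x - gam L f (L g) x - gam L (L f) g x) / 2

/-- `G` has no 4-cycle subgraph, equivalently any two distinct vertices have at
most one common neighbor. -/
def C4Free (G : SimpleGraph V) : Prop :=
  ∀ ⦃u v a b : V⦄, u ≠ v → G.Adj u a → G.Adj a v → G.Adj u b → G.Adj b v → a = b



lemma gam_nLap (G : SimpleGraph V) [G.LocallyFinite] (g h : V → ℝ) (v : V) :
    gam (nLap G) g h v =
      (∑ y ∈ G.neighborFinset v, (g y - g v) * (h y - h v)) / (2 * (G.degree v : ℝ)) := by
  have key : (∑ y ∈ G.neighborFinset v, ((g * h) y - (g * h) v))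
      = (∑ y ∈ G.neighborFinset v, (g y - g v) * (h y - h v))
        + g v * (∑ y ∈ G.neighborFinset v, (h y - h v))
        + h v * (∑ y ∈ G.neighborFinset v, (g y - g v)) := by
    rw [Finset.mul_sum, Finset.mul_sum, ← Finset.sum_add_distrib, ← Finset.sum_add_distrib]
    exact Finset.sum_congr rfl fun y _ => by simp only [Pi.mul_apply]; ring
  unfold gam nLap
  rw [key]
  ring

/-- Bochner-type identity for the unweighted normalized Laplacian. -/
theorem stmt_6 (G : SimpleGraph V) [G.LocallyFinite]
    (hd : ∀ v : V, 0 < G.degree v) (f : V → ℝ) (x : V) :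
    gam2 (nLap G) f f x =
      (1 / 4) * ∑ y ∈ G.neighborFinset x, ∑ z ∈ G.neighborFinset y,
          (1 / ((G.degree x : ℝ) * (G.degree y : ℝ))) * (f x - 2 * f y + f z) ^ 2
      + (1 / 2) * (nLap G f x) ^ 2
      - (1 / 2) * ∑ y ∈ G.neighborFinset x,
          (1 / (G.degree x : ℝ)) * (f y - f x) ^ 2 := by
  have hD : ∀ v : V, (G.degree v : ℝ) ≠ 0 := fun v => Nat.cast_ne_zero.mpr (hd v).ne'
  have hcard : ∀ v : V, ((G.neighborFinset v).card : ℝ) = (G.degree v : ℝ) := fun v => by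
    rw [G.card_neighborFinset_eq_degree]
  unfold gam2
  simp only [nLap, gam_nLap]
  simp only [← pow_two]
  have hA : (∑ y ∈ G.neighborFinset x,
        ((∑ z ∈ G.neighborFinset y, (f z - f y) ^ 2) / (2 * (G.degree y : ℝ))
          - (∑ y' ∈ G.neighborFinset x, (f y' - f x) ^ 2) / (2 * (G.degree x : ℝ))))
      = (∑ y ∈ G.neighborFinset x,
          (∑ z ∈ G.neighborFinset y, (f z - f y) ^ 2) / (G.degree y : ℝ)) / 2
        - (G.degree x : ℝ) *
          ((∑ y' ∈ G.neighborFinset x, (f y' - f x) ^ 2) / (2 * (G.degree x : ℝ))) := by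
    rw [Finset.sum_sub_distrib, Finset.sum_const, nsmul_eq_mul, hcard x]
    congr 1
    conv_rhs => rw [Finset.sum_div]
    refine Finset.sum_congr rfl fun y _ => ?_
    rw [div_div, mul_comm (2:ℝ)]
  have hB : (∑ y ∈ G.neighborFinset x, (f y - f x) *
        ((∑ z ∈ G.neighborFinset y, (f z - f y)) / (G.degree y : ℝ)
          - (∑ y' ∈ G.neighborFinset x, (f y' - f x)) / (G.degree x : ℝ)))
      = (∑ y ∈ G.neighborFinset x,
          (f y - f x) * ((∑ z ∈ G.neighborFinset y, (f z - f y)) / (G.degree y : ℝ)))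
        - ((∑ y' ∈ G.neighborFinset x, (f y' - f x)) / (G.degree x : ℝ))
          * (∑ y ∈ G.neighborFinset x, (f y - f x)) := by
    conv_rhs => rw [Finset.mul_sum]
    rw [← Finset.sum_sub_distrib]
    refine Finset.sum_congr rfl fun y _ => ?_
    ring
  have hC : (∑ y ∈ G.neighborFinset x,
        ((∑ z ∈ G.neighborFinset y, (f z - f y)) / (G.degree y : ℝ)
          - (∑ y' ∈ G.neighborFinset x, (f y' - f x)) / (G.degree x : ℝ)) * (f y - f x))
      = (∑ y ∈ G.neighborFinset x,
          (f y - f x) * ((∑ z ∈ G.neighborFinset y, (f z - f y)) / (G.degree y : ℝ)))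
        - ((∑ y' ∈ G.neighborFinset x, (f y' - f x)) / (G.degree x : ℝ))
          * (∑ y ∈ G.neighborFinset x, (f y - f x)) := by
    conv_rhs => rw [Finset.mul_sum]
    rw [← Finset.sum_sub_distrib]
    refine Finset.sum_congr rfl fun y _ => ?_
    ring
  have hE : (∑ y ∈ G.neighborFinset x,
        ∑ z ∈ G.neighborFinset y,
          1 / ((G.degree x : ℝ) * (G.degree y : ℝ)) * (f x - 2 * f y + f z) ^ 2)
      = (1 / (G.degree x : ℝ)) *
        ((∑ y ∈ G.neighborFinset x,
            (∑ z ∈ G.neighborFinset y, (f z - f y) ^ 2) / (G.degree y : ℝ))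
          - 2 * (∑ y ∈ G.neighborFinset x,
              (f y - f x) * ((∑ z ∈ G.neighborFinset y, (f z - f y)) / (G.degree y : ℝ)))
          + (∑ y ∈ G.neighborFinset x, (f y - f x) ^ 2)) := by
    have inner : ∀ y ∈ G.neighborFinset x,
        (∑ z ∈ G.neighborFinset y,
            1 / ((G.degree x : ℝ) * (G.degree y : ℝ)) * (f x - 2 * f y + f z) ^ 2)
        = (1 / (G.degree x : ℝ)) *
            ((∑ z ∈ G.neighborFinset y, (f z - f y) ^ 2) / (G.degree y : ℝ)
              - 2 * ((f y - f x) * ((∑ z ∈ G.neighborFinset y, (f z - f y)) / (G.degree y : ℝ)))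
              + (f y - f x) ^ 2) := by
      intro y _
      have h1 : (∑ z ∈ G.neighborFinset y,
            1 / ((G.degree x : ℝ) * (G.degree y : ℝ)) * (f x - 2 * f y + f z) ^ 2)
          = ∑ z ∈ G.neighborFinset y,
              (1 / ((G.degree x : ℝ) * (G.degree y : ℝ)) * (f z - f y) ^ 2
                - (2 * (f y - f x) / ((G.degree x : ℝ) * (G.degree y : ℝ))) * (f z - f y)
                + (f y - f x) ^ 2 / ((G.degree x : ℝ) * (G.degree y : ℝ))) :=
        Finset.sum_congr rfl fun z _ => by ring
      rw [h1, Finset.sum_add_distrib, Finset.sum_sub_distrib, ← Finset.mul_sum, ← Finset.mul_sum,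
        Finset.sum_const, nsmul_eq_mul, hcard y]
      field_simp [hD x, hD y]
    rw [Finset.sum_congr rfl inner, ← Finset.mul_sum]
    congr 1
    rw [Finset.sum_add_distrib, Finset.sum_sub_distrib, ← Finset.mul_sum]
  have hF : (∑ y ∈ G.neighborFinset x, 1 / (G.degree x : ℝ) * (f y - f x) ^ 2)
      = (1 / (G.degree x : ℝ)) * (∑ y ∈ G.neighborFinset x, (f y - f x) ^ 2) := by
    rw [Finset.mul_sum]
  rw [hA, hB, hC, hE, hF]
  have hx := hD x
  set d := (G.degree x : ℝ) with hdd
  set P := ∑ y ∈ G.neighborFinset x, (∑ z ∈ G.neighborFinset y, (f z - f y) ^ 2) / (G.degree y : ℝ) with hPP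
  set Q := ∑ y ∈ G.neighborFinset x, (f y - f x) * ((∑ z ∈ G.neighborFinset y, (f z - f y)) / (G.degree y : ℝ)) with hQQ
  set S1 := ∑ y ∈ G.neighborFinset x, (f y - f x) with hS1
  set S2 := ∑ y ∈ G.neighborFinset x, (f y - f x) ^ 2 with hS2
  field_simp
  ring
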